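/- arXiv:1301.0739 — 2 statements merged into one kernel-verified Lean document; each statement's English description precedes it below -/
import Mathlib

section
/- Let K be a connected, locally finite graph with weights c, r, that is complete and homogeneous. Then the Gauß–Bonnet operator D = d + δ, defined on finitely supported cochains in L²(V) ⊕ L²(E), is essentially self-adjoint. -/
open Filter Topology

namespace GaussBonnetGraph

variable {V : Type*}

/-- Local finiteness of a graph: each vertex has finitely many neighbours. -/
def LocFin (G : SimpleGraph V) : Prop := ∀ v : V, (G.neighborSet v).Finite

/-- 1-cochains: odd functions on oriented edges. -/
def IsForm (φ : V → V → ℝ) : Prop := ∀ x y : V, φ y x = - φ x y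

/-- a 1-cochain supported on the (oriented) edges of `G` -/
def SuppEdges (G : SimpleGraph V) (φ : V → V → ℝ) : Prop :=
  ∀ x y : V, ¬ G.Adj x y → φ x y = 0

/-- the difference operator `d f (e) = f e⁺ - f e⁻`, where `e = (x, y)`, `e⁻ = x`, `e⁺ = y`. -/
def dOp (f : V → ℝ) : V → V → ℝ := fun x y => f y - f x

/-- the coboundary operator `δ φ x = (1 / c x) ∑_{e : e⁺ = x} r e * φ e`;
the oriented edges with head `x` are the pairs `(y, x)` with `y` a neighbour of `x`. -/
noncomputable def deltaOp (G : SimpleGraph V) (h : LocFin G) (c : V → ℝ) (r : V → V → ℝ)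
    (φ : V → V → ℝ) (x : V) : ℝ :=
  (1 / c x) * ∑ y ∈ (h x).toFinset, r y x * φ y x

/-- the weighted scalar product of 0-cochains -/
noncomputable def ip0 (c : V → ℝ) (f g : V → ℝ) : ℝ := ∑' v : V, c v * f v * g v

/-- the weighted scalar product of 1-cochains; a dart of `G` is an oriented edge -/
noncomputable def ip1 (G : SimpleGraph V) (r : V → V → ℝ) (φ ψ : V → V → ℝ) : ℝ :=
  (1 / 2) * ∑' e : G.Dart, r e.fst e.snd * φ e.fst e.snd * ψ e.fst e.snd

noncomputable def nrm0 (c : V → ℝ) (f : V → ℝ) : ℝ := Real.sqrt (ip0 c f f)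

noncomputable def nrm1 (G : SimpleGraph V) (r : V → V → ℝ) (φ : V → V → ℝ) : ℝ :=
  Real.sqrt (ip1 G r φ φ)

/-- membership in `L²(V)` -/
def Mem0 (c : V → ℝ) (f : V → ℝ) : Prop := Summable (fun v : V => c v * (f v) ^ 2)

/-- square-summability of a 1-cochain, i.e. membership in `L²(E)` -/
def Mem1 (G : SimpleGraph V) (r : V → V → ℝ) (φ : V → V → ℝ) : Prop :=
  Summable (fun e : G.Dart => r e.fst e.snd * (φ e.fst e.snd) ^ 2)

/-- `f` is in the domain of `d_max`: `d f` is square-summable on the edges -/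
def MemD (G : SimpleGraph V) (r : V → V → ℝ) (f : V → ℝ) : Prop :=
  Mem1 G r (fun x y => dOp f x y)

/-- finite support for 0-cochains -/
def FinSupp0 (f : V → ℝ) : Prop := (Function.support f).Finite

/-- finite support for 1-cochains -/
def FinSupp1 (φ : V → V → ℝ) : Prop := {p : V × V | φ p.1 p.2 ≠ 0}.Finite

/-- the data witnessing completeness of a weighted graph: an exhausting sequence of finite
sets `Bₙ` together with cut-off functions `χₙ`. -/
structure CompleteData (G : SimpleGraph V) where
  B : ℕ → Set V
  chi : ℕ → V → ℝ
  finB : ∀ n, (B n).Finite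
  monoB : Monotone B
  exhausts : ∀ v : V, ∃ n, v ∈ B n
  finsupp_chi : ∀ n, FinSupp0 (chi n)
  chi_nonneg : ∀ n v, 0 ≤ chi n v
  chi_le_one : ∀ n v, chi n v ≤ 1
  chi_eq_one : ∀ n, ∀ v ∈ B n, chi n v = 1
  stab : ∀ p : ℕ, ∃ n₀, ∀ n ≥ n₀, ∀ x y : V, G.Adj x y → (x ∈ B p ∨ y ∈ B p) →
    dOp (chi n) x y = 0

/-- homogeneity of a complete weighted graph: the sum is over all oriented edges `e`
with `e⁺ = x` or `e⁻ = x`. -/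
def Homogeneous (G : SimpleGraph V) (h : LocFin G) (c : V → ℝ) (r : V → V → ℝ)
    (cd : CompleteData G) : Prop :=
  ∃ C > 0, ∀ n : ℕ, ∀ x : V,
    (1 / c x) * ∑ y ∈ (h x).toFinset,
      (r y x * (dOp (cd.chi n) y x) ^ 2 + r x y * (dOp (cd.chi n) x y) ^ 2) ≤ C

/-! ### Auxiliary lemmas -/

/-- darts grouped by their head -/
noncomputable def dartEquiv (G : SimpleGraph V) (h : LocFin G) :
    G.Dart ≃ Σ x : V, {y : V // y ∈ (h x).toFinset} where
  toFun e := ⟨e.snd, e.fst, by rw [Set.Finite.mem_toFinset]; exact e.adj.symm⟩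
  invFun s := ⟨(s.2.1, s.1), by
    have := s.2.2; rw [Set.Finite.mem_toFinset, SimpleGraph.mem_neighborSet] at this
    exact this.symm⟩
  left_inv e := by cases e; rfl
  right_inv s := rfl

lemma group_summable (G : SimpleGraph V) (h : LocFin G) (F : V → V → ℝ)
    (hF : ∀ x y, G.Adj x y → 0 ≤ F y x)
    (hs : Summable (fun e : G.Dart => F e.fst e.snd)) :
    Summable (fun x : V => ∑ y ∈ (h x).toFinset, F y x) := by
  set q : (Σ x : V, {y : V // y ∈ (h x).toFinset}) → ℝ := fun s => F s.2.1 s.1 with hq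
  have hq0 : ∀ s, 0 ≤ q s := by
    rintro ⟨x, y, hy⟩
    rw [Set.Finite.mem_toFinset, SimpleGraph.mem_neighborSet] at hy
    exact hF x y hy
  have hsum : Summable q := by
    have : (fun e : G.Dart => F e.fst e.snd) = q ∘ (dartEquiv G h) := rfl
    rw [this] at hs
    exact (Equiv.summable_iff (dartEquiv G h)).mp hs
  have h2 := (summable_sigma_of_nonneg hq0).mp hsum
  have h3 : (fun x : V => ∑' y : {y : V // y ∈ (h x).toFinset}, q ⟨x, y⟩)
      = fun x : V => ∑ y ∈ (h x).toFinset, F y x := by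
    funext x
    exact Finset.tsum_subtype ((h x).toFinset) (fun y => F y x)
  rw [← h3]
  exact h2.2

lemma group_tsum (G : SimpleGraph V) (h : LocFin G) (F : V → V → ℝ)
    (hF : ∀ x y, G.Adj x y → 0 ≤ F y x)
    (hs : Summable (fun x : V => ∑ y ∈ (h x).toFinset, F y x)) :
    Summable (fun e : G.Dart => F e.fst e.snd) ∧
      ∑' e : G.Dart, F e.fst e.snd = ∑' x : V, ∑ y ∈ (h x).toFinset, F y x := by
  set q : (Σ x : V, {y : V // y ∈ (h x).toFinset}) → ℝ := fun s => F s.2.1 s.1 with hq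
  have hq0 : ∀ s, 0 ≤ q s := by
    rintro ⟨x, y, hy⟩
    rw [Set.Finite.mem_toFinset, SimpleGraph.mem_neighborSet] at hy
    exact hF x y hy
  have hfib : ∀ x : V, Summable (fun y : {y : V // y ∈ (h x).toFinset} => q ⟨x, y⟩) :=
    fun x => Summable.of_finite
  have h3 : ∀ x : V, ∑' y : {y : V // y ∈ (h x).toFinset}, q ⟨x, y⟩
      = ∑ y ∈ (h x).toFinset, F y x := by
    intro x
    exact Finset.tsum_subtype ((h x).toFinset) (fun y => F y x)
  have hsum : Summable q := by
    apply (summable_sigma_of_nonneg hq0).mpr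
    refine ⟨hfib, ?_⟩
    simpa only [h3] using hs
  have hdart : Summable (fun e : G.Dart => F e.fst e.snd) := by
    have : (fun e : G.Dart => F e.fst e.snd) = q ∘ (dartEquiv G h) := rfl
    rw [this]
    exact (Equiv.summable_iff (dartEquiv G h)).mpr hsum
  refine ⟨hdart, ?_⟩
  have e1 : ∑' e : G.Dart, F e.fst e.snd = ∑' s, q s := Equiv.tsum_eq (dartEquiv G h) q
  rw [e1, Summable.tsum_sigma' hfib hsum]
  exact tsum_congr h3

/-- dominated convergence to zero for sums of nonnegative functions -/
lemma myDC {ι : Type*} {F : ℕ → ι → ℝ} {g : ι → ℝ} (hg : Summable g)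
    (h0 : ∀ n i, 0 ≤ F n i) (hle : ∀ n i, F n i ≤ g i)
    (hev : ∀ i, ∀ᶠ n in atTop, F n i = 0) :
    Tendsto (fun n => ∑' i, F n i) atTop (𝓝 0) := by
  have := tendsto_tsum_of_dominated_convergence (𝓕 := atTop) (f := F)
    (g := fun _ : ι => (0 : ℝ)) (bound := g) hg
    (fun i => Tendsto.congr' ((hev i).mono fun n hn => hn.symm) tendsto_const_nhds)
    (Eventually.of_forall fun n i => by
      rw [Real.norm_of_nonneg (h0 n i)]; exact hle n i)
  simpa [tsum_zero] using this

lemma sqrt_tendsto {a : ℕ → ℝ} (ha : Tendsto a atTop (𝓝 0)) :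
    Tendsto (fun n => Real.sqrt (a n)) atTop (𝓝 0) := by
  have := (Real.continuous_sqrt.tendsto 0).comp ha
  simpa [Function.comp_def] using this

set_option maxHeartbeats 1000000 in
/-- on a connected, locally finite, complete and homogeneous weighted graph the
Gauß–Bonnet operator `D = d + δ`, defined on finitely supported cochains, is essentially
self-adjoint: every pair `(f, φ)` in the domain of the adjoint `D*` (equivalently, with
`f, d f, φ, δ φ` all square-summable) is approximated in graph norm by finitely supported
cochains. -/
theorem gaussBonnet_essentially_selfAdjoint_of_complete_homogeneous
    (G : SimpleGraph V) (hG : G.Connected) (h : LocFin G)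
    (c : V → ℝ) (r : V → V → ℝ) (hc : ∀ v, 0 < c v)
    (hr : ∀ x y, G.Adj x y → 0 < r x y) (hrs : ∀ x y : V, r x y = r y x)
    (cd : CompleteData G) (hom : Homogeneous G h c r cd) :
    ∀ (f : V → ℝ) (φ : V → V → ℝ), Mem0 c f → MemD G r f → IsForm φ → Mem1 G r φ →
      Mem0 c (deltaOp G h c r φ) →
      ∃ (u : ℕ → V → ℝ) (w : ℕ → V → V → ℝ),
        (∀ n, FinSupp0 (u n)) ∧ (∀ n, IsForm (w n) ∧ FinSupp1 (w n)) ∧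
        Tendsto (fun n => nrm0 c (fun v => u n v - f v)) atTop (𝓝 0) ∧
        Tendsto (fun n => nrm1 G r (fun x y => w n x y - φ x y)) atTop (𝓝 0) ∧
        Tendsto (fun n => nrm1 G r (fun x y => dOp (u n) x y - dOp f x y)) atTop (𝓝 0) ∧
        Tendsto (fun n => nrm0 c
          (fun v => deltaOp G h c r (w n) v - deltaOp G h c r φ v)) atTop (𝓝 0) := by
  intro f φ hf hdf hform hφ hδφ
  obtain ⟨C, hCpos, hhom⟩ := hom
  -- eventually the cut-off is 1 near any vertex
  have hev1 : ∀ x : V, ∀ᶠ n in atTop,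
      cd.chi n x = 1 ∧ ∀ y, G.Adj x y → cd.chi n y = 1 := by
    intro x
    obtain ⟨p, hp⟩ := cd.exhausts x
    obtain ⟨n₀, hn₀⟩ := cd.stab p
    rw [eventually_atTop]
    refine ⟨max p n₀, fun n hn => ?_⟩
    have hx1 : cd.chi n x = 1 :=
      cd.chi_eq_one n x (cd.monoB (le_trans (le_max_left p n₀) hn) hp)
    refine ⟨hx1, fun y hadj => ?_⟩
    have h0 := hn₀ n (le_trans (le_max_right p n₀) hn) x y hadj (Or.inl hp)
    have : cd.chi n y = cd.chi n x := by
      unfold dOp at h0; linarith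
    rw [this, hx1]
  -- summable grouped quantities
  have hSφ : Summable (fun x : V => ∑ y ∈ (h x).toFinset, r y x * φ y x ^ 2) :=
    group_summable G h (fun a b => r a b * φ a b ^ 2)
      (fun x y hadj => mul_nonneg (hr y x hadj.symm).le (sq_nonneg _)) hφ
  have hSdf : Summable (fun x : V => ∑ y ∈ (h x).toFinset, r y x * dOp f y x ^ 2) :=
    group_summable G h (fun a b => r a b * dOp f a b ^ 2)
      (fun x y hadj => mul_nonneg (hr y x hadj.symm).le (sq_nonneg _)) hdf
  have hSφ0 : ∀ x : V, 0 ≤ ∑ y ∈ (h x).toFinset, r y x * φ y x ^ 2 := by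
    intro x
    refine Finset.sum_nonneg fun y hy => ?_
    rw [Set.Finite.mem_toFinset, SimpleGraph.mem_neighborSet] at hy
    exact mul_nonneg (hr y x hy.symm).le (sq_nonneg _)
  -- consequence of homogeneity
  have hQ : ∀ n : ℕ, ∀ x : V,
      ∑ y ∈ (h x).toFinset, r y x * (cd.chi n y - cd.chi n x) ^ 2 ≤ C * c x := by
    intro n x
    have h1 := hhom n x
    have hcx := hc x
    have hterm : ∀ y ∈ (h x).toFinset, r y x * (cd.chi n y - cd.chi n x) ^ 2 ≤
        r y x * (dOp (cd.chi n) y x) ^ 2 + r x y * (dOp (cd.chi n) x y) ^ 2 := by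
      intro y hy
      rw [Set.Finite.mem_toFinset, SimpleGraph.mem_neighborSet] at hy
      have h2 : 0 ≤ r x y * (dOp (cd.chi n) x y) ^ 2 :=
        mul_nonneg (hr x y hy).le (sq_nonneg _)
      have h3 : (cd.chi n y - cd.chi n x) ^ 2 = (dOp (cd.chi n) y x) ^ 2 := by
        unfold dOp; ring
      rw [h3]; linarith
    have hsum := Finset.sum_le_sum hterm
    calc ∑ y ∈ (h x).toFinset, r y x * (cd.chi n y - cd.chi n x) ^ 2
        ≤ ∑ y ∈ (h x).toFinset,
          (r y x * (dOp (cd.chi n) y x) ^ 2 + r x y * (dOp (cd.chi n) x y) ^ 2) := hsum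
      _ = c x * ((1 / c x) * ∑ y ∈ (h x).toFinset,
          (r y x * (dOp (cd.chi n) y x) ^ 2 + r x y * (dOp (cd.chi n) x y) ^ 2)) := by
          field_simp
      _ ≤ c x * C := mul_le_mul_of_nonneg_left h1 hcx.le
      _ = C * c x := mul_comm _ _
  refine ⟨fun n v => cd.chi n v * f v, fun n x y => cd.chi n x * cd.chi n y * φ x y,
    ?_, ?_, ?_, ?_, ?_, ?_⟩
  · -- finite support of u n
    intro n
    refine (cd.finsupp_chi n).subset ?_
    intro v hv
    exact left_ne_zero_of_mul hv
  · -- w n is a form with finite support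
    intro n
    constructor
    · intro x y
      show cd.chi n y * cd.chi n x * φ y x = -(cd.chi n x * cd.chi n y * φ x y)
      rw [hform x y]; ring
    · refine ((cd.finsupp_chi n).prod (cd.finsupp_chi n)).subset ?_
      rintro ⟨x, y⟩ hxy
      simp only [Set.mem_setOf_eq] at hxy
      exact ⟨left_ne_zero_of_mul (left_ne_zero_of_mul hxy),
        right_ne_zero_of_mul (left_ne_zero_of_mul hxy)⟩
  · -- u n → f in L²(V)
    apply sqrt_tendsto
    apply myDC (g := fun v => c v * f v ^ 2) hf
    · intro n v
      rw [mul_assoc]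
      exact mul_nonneg (hc v).le (mul_self_nonneg _)
    · intro n v
      show c v * (cd.chi n v * f v - f v) * (cd.chi n v * f v - f v) ≤ c v * f v ^ 2
      have h1 := cd.chi_nonneg n v
      have h2 := cd.chi_le_one n v
      have h3 := (hc v).le
      nlinarith [mul_nonneg (mul_nonneg h3 (sq_nonneg (f v)))
        (mul_nonneg h1 (by linarith : (0:ℝ) ≤ 2 - cd.chi n v))]
    · intro v
      filter_upwards [hev1 v] with n hn
      rw [hn.1]; ring
  · -- w n → φ in L²(E)
    apply sqrt_tendsto
    have key : Tendsto (fun n => ∑' e : G.Dart,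
        r e.fst e.snd * (cd.chi n e.fst * cd.chi n e.snd * φ e.fst e.snd - φ e.fst e.snd) *
          (cd.chi n e.fst * cd.chi n e.snd * φ e.fst e.snd - φ e.fst e.snd))
        atTop (𝓝 0) := by
      apply myDC (g := fun e : G.Dart => r e.fst e.snd * φ e.fst e.snd ^ 2) hφ
      · intro n e
        rw [mul_assoc]
        exact mul_nonneg (hr _ _ e.adj).le (mul_self_nonneg _)
      · intro n e
        have h1 := cd.chi_nonneg n e.fst
        have h2 := cd.chi_le_one n e.fst
        have h3 := cd.chi_nonneg n e.snd
        have h4 := cd.chi_le_one n e.snd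
        have h5 := (hr _ _ e.adj).le
        have hab : 0 ≤ cd.chi n e.fst * cd.chi n e.snd := mul_nonneg h1 h3
        have hab1 : cd.chi n e.fst * cd.chi n e.snd ≤ 1 := by nlinarith
        nlinarith [mul_nonneg (mul_nonneg h5 (sq_nonneg (φ e.fst e.snd)))
          (mul_nonneg hab (by linarith : (0:ℝ) ≤ 2 - cd.chi n e.fst * cd.chi n e.snd))]
      · intro e
        filter_upwards [hev1 e.fst] with n hn
        rw [hn.1, hn.2 e.snd e.adj]; ring
    show Tendsto (fun n => (1/2 : ℝ) * ∑' e : G.Dart,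
        r e.fst e.snd * (cd.chi n e.fst * cd.chi n e.snd * φ e.fst e.snd - φ e.fst e.snd) *
          (cd.chi n e.fst * cd.chi n e.snd * φ e.fst e.snd - φ e.fst e.snd))
        atTop (𝓝 0)
    simpa using key.const_mul (1/2 : ℝ)
  · -- d u n → d f in L²(E)
    apply sqrt_tendsto
    set Dn : ℕ → V → V → ℝ :=
      fun n a b => dOp (fun v => cd.chi n v * f v) a b - dOp f a b with hDn
    set Kn : ℕ → V → ℝ :=
      fun n x => ∑ y ∈ (h x).toFinset, r y x * Dn n y x * Dn n y x with hKn
    have hK0 : ∀ n x, 0 ≤ Kn n x := by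
      intro n x
      refine Finset.sum_nonneg fun y hy => ?_
      rw [Set.Finite.mem_toFinset, SimpleGraph.mem_neighborSet] at hy
      rw [mul_assoc]
      exact mul_nonneg (hr y x hy.symm).le (mul_self_nonneg _)
    have hgs : Summable (fun x : V =>
        2 * (∑ y ∈ (h x).toFinset, r y x * dOp f y x ^ 2) + 2 * C * (c x * f x ^ 2)) :=
      (hSdf.mul_left 2).add (hf.mul_left (2 * C))
    have hKle : ∀ n x, Kn n x ≤
        2 * (∑ y ∈ (h x).toFinset, r y x * dOp f y x ^ 2) + 2 * C * (c x * f x ^ 2) := by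
      intro n x
      have step1 : Kn n x ≤ ∑ y ∈ (h x).toFinset,
          (2 * (r y x * dOp f y x ^ 2) +
            2 * f x ^ 2 * (r y x * (cd.chi n y - cd.chi n x) ^ 2)) := by
        refine Finset.sum_le_sum fun y hy => ?_
        rw [Set.Finite.mem_toFinset, SimpleGraph.mem_neighborSet] at hy
        have hR := (hr y x hy.symm).le
        have h1 := cd.chi_nonneg n y
        have h2 := cd.chi_le_one n y
        have hid : Dn n y x =
            (cd.chi n y - 1) * dOp f y x - f x * (cd.chi n y - cd.chi n x) := by
          simp only [hDn]; unfold dOp; ring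
        rw [hid]
        set a := dOp f y x
        set b := cd.chi n y - cd.chi n x
        set t := cd.chi n y
        nlinarith [mul_nonneg hR (sq_nonneg ((t - 1) * a + f x * b)),
          mul_nonneg (mul_nonneg (mul_nonneg hR (sq_nonneg a)) h1)
            (by linarith : (0:ℝ) ≤ 2 - t),
          mul_nonneg hR (sq_nonneg a), mul_nonneg hR (sq_nonneg b),
          mul_nonneg (mul_nonneg hR (sq_nonneg b)) (sq_nonneg (f x))]
      have step2 : ∑ y ∈ (h x).toFinset,
          (2 * (r y x * dOp f y x ^ 2) +
            2 * f x ^ 2 * (r y x * (cd.chi n y - cd.chi n x) ^ 2)) =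
          2 * (∑ y ∈ (h x).toFinset, r y x * dOp f y x ^ 2) +
          2 * f x ^ 2 * (∑ y ∈ (h x).toFinset, r y x * (cd.chi n y - cd.chi n x) ^ 2) := by
        rw [Finset.sum_add_distrib, Finset.mul_sum, Finset.mul_sum]
      have step3 : 2 * f x ^ 2 *
          (∑ y ∈ (h x).toFinset, r y x * (cd.chi n y - cd.chi n x) ^ 2) ≤
          2 * f x ^ 2 * (C * c x) :=
        mul_le_mul_of_nonneg_left (hQ n x) (by positivity)
      calc Kn n x ≤ _ := step1
        _ = _ := step2
        _ ≤ 2 * (∑ y ∈ (h x).toFinset, r y x * dOp f y x ^ 2) + 2 * f x ^ 2 * (C * c x) := by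
            linarith
        _ = 2 * (∑ y ∈ (h x).toFinset, r y x * dOp f y x ^ 2) + 2 * C * (c x * f x ^ 2) := by
            ring
    have hKev : ∀ x, ∀ᶠ n in atTop, Kn n x = 0 := by
      intro x
      filter_upwards [hev1 x] with n hn
      refine Finset.sum_eq_zero fun y hy => ?_
      rw [Set.Finite.mem_toFinset, SimpleGraph.mem_neighborSet] at hy
      have hD : Dn n y x = 0 := by
        show dOp (fun v => cd.chi n v * f v) y x - dOp f y x = 0
        unfold dOp
        simp only [hn.1, hn.2 y hy]; ring
      rw [hD]; ring
    have hKtend : Tendsto (fun n => ∑' x, Kn n x) atTop (𝓝 0) := myDC hgs hK0 hKle hKev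
    have heq : (fun n => ip1 G r (fun x y => Dn n x y) (fun x y => Dn n x y)) =
        fun n => (1/2 : ℝ) * ∑' x, Kn n x := by
      funext n
      have hGrp := group_tsum G h (fun a b => r a b * Dn n a b * Dn n a b)
        (by
          intro x y hadj
          show 0 ≤ r y x * Dn n y x * Dn n y x
          rw [mul_assoc]; exact mul_nonneg (hr y x hadj.symm).le (mul_self_nonneg _))
        (Summable.of_nonneg_of_le (hK0 n) (hKle n) hgs)
      show (1/2 : ℝ) * ∑' e : G.Dart,
          r e.fst e.snd * Dn n e.fst e.snd * Dn n e.fst e.snd = _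
      rw [hGrp.2]
    show Tendsto (fun n => ip1 G r (fun x y => Dn n x y) (fun x y => Dn n x y)) atTop (𝓝 0)
    rw [heq]
    simpa using hKtend.const_mul (1/2 : ℝ)
  · -- δ w n → δ φ in L²(V)
    apply sqrt_tendsto
    set w : ℕ → V → V → ℝ := fun n x y => cd.chi n x * cd.chi n y * φ x y with hw
    set dn : ℕ → V → ℝ :=
      fun n x => deltaOp G h c r (w n) x - deltaOp G h c r φ x with hdn
    have hid : ∀ n x, dn n x = (cd.chi n x ^ 2 - 1) * deltaOp G h c r φ x +
        cd.chi n x * ((1 / c x) *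
          ∑ y ∈ (h x).toFinset, r y x * φ y x * (cd.chi n y - cd.chi n x)) := by
      intro n x
      have hs : ∑ y ∈ (h x).toFinset, r y x * (cd.chi n y * cd.chi n x * φ y x) =
          cd.chi n x ^ 2 * ∑ y ∈ (h x).toFinset, r y x * φ y x +
          cd.chi n x * ∑ y ∈ (h x).toFinset, r y x * φ y x * (cd.chi n y - cd.chi n x) := by
        rw [Finset.mul_sum, Finset.mul_sum, ← Finset.sum_add_distrib]
        exact Finset.sum_congr rfl fun y _ => by ring
      simp only [hdn, hw]
      unfold deltaOp
      rw [hs]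
      ring
    have hCS : ∀ n x, (∑ y ∈ (h x).toFinset, r y x * φ y x * (cd.chi n y - cd.chi n x)) ^ 2 ≤
        (∑ y ∈ (h x).toFinset, r y x * φ y x ^ 2) *
        (∑ y ∈ (h x).toFinset, r y x * (cd.chi n y - cd.chi n x) ^ 2) := by
      intro n x
      have key := Finset.sum_mul_sq_le_sq_mul_sq ((h x).toFinset)
        (fun y => Real.sqrt (r y x) * φ y x)
        (fun y => Real.sqrt (r y x) * (cd.chi n y - cd.chi n x))
      have e1 : ∑ y ∈ (h x).toFinset,
          (Real.sqrt (r y x) * φ y x) * (Real.sqrt (r y x) * (cd.chi n y - cd.chi n x)) =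
          ∑ y ∈ (h x).toFinset, r y x * φ y x * (cd.chi n y - cd.chi n x) := by
        refine Finset.sum_congr rfl fun y hy => ?_
        rw [Set.Finite.mem_toFinset, SimpleGraph.mem_neighborSet] at hy
        have hR := (hr y x hy.symm).le
        rw [show (Real.sqrt (r y x) * φ y x) * (Real.sqrt (r y x) * (cd.chi n y - cd.chi n x))
          = (Real.sqrt (r y x) * Real.sqrt (r y x)) * (φ y x * (cd.chi n y - cd.chi n x))
          from by ring, Real.mul_self_sqrt hR]
        ring
      have e2 : ∑ y ∈ (h x).toFinset, (Real.sqrt (r y x) * φ y x) ^ 2 =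
          ∑ y ∈ (h x).toFinset, r y x * φ y x ^ 2 := by
        refine Finset.sum_congr rfl fun y hy => ?_
        rw [Set.Finite.mem_toFinset, SimpleGraph.mem_neighborSet] at hy
        rw [mul_pow, Real.sq_sqrt (hr y x hy.symm).le]
      have e3 : ∑ y ∈ (h x).toFinset, (Real.sqrt (r y x) * (cd.chi n y - cd.chi n x)) ^ 2 =
          ∑ y ∈ (h x).toFinset, r y x * (cd.chi n y - cd.chi n x) ^ 2 := by
        refine Finset.sum_congr rfl fun y hy => ?_
        rw [Set.Finite.mem_toFinset, SimpleGraph.mem_neighborSet] at hy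
        rw [mul_pow, Real.sq_sqrt (hr y x hy.symm).le]
      rw [e1, e2, e3] at key
      exact key
    have hgs : Summable (fun x : V => 2 * (c x * deltaOp G h c r φ x ^ 2) +
        2 * C * (∑ y ∈ (h x).toFinset, r y x * φ y x ^ 2)) :=
      (hδφ.mul_left 2).add (hSφ.mul_left (2 * C))
    have hFle : ∀ n x, c x * dn n x * dn n x ≤
        2 * (c x * deltaOp G h c r φ x ^ 2) +
        2 * C * (∑ y ∈ (h x).toFinset, r y x * φ y x ^ 2) := by
      intro n x
      have hcx := hc x
      set a := deltaOp G h c r φ x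
      set S := ∑ y ∈ (h x).toFinset, r y x * φ y x * (cd.chi n y - cd.chi n x) with hS
      set Sp := ∑ y ∈ (h x).toFinset, r y x * φ y x ^ 2 with hSp
      set Q := ∑ y ∈ (h x).toFinset, r y x * (cd.chi n y - cd.chi n x) ^ 2 with hQdef
      have ht0 := cd.chi_nonneg n x
      have ht1 := cd.chi_le_one n x
      set t := cd.chi n x
      have hdneq : dn n x = (t ^ 2 - 1) * a + t * ((1 / c x) * S) := hid n x
      have hS2 : S ^ 2 ≤ Sp * Q := hCS n x
      have hQle : Q ≤ C * c x := hQ n x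
      have hSp0 : 0 ≤ Sp := hSφ0 x
      have hQ0 : 0 ≤ Q := by
        refine Finset.sum_nonneg fun y hy => ?_
        rw [Set.Finite.mem_toFinset, SimpleGraph.mem_neighborSet] at hy
        exact mul_nonneg (hr y x hy.symm).le (sq_nonneg _)
      have h4 : c x * ((1 / c x) * S) ^ 2 ≤ C * Sp := by
        have he : c x * ((1 / c x) * S) ^ 2 = S ^ 2 / c x := by
          field_simp
        rw [he]
        calc S ^ 2 / c x ≤ (Sp * Q) / c x := (div_le_div_iff_of_pos_right hcx).mpr hS2
          _ ≤ (Sp * (C * c x)) / c x := (div_le_div_iff_of_pos_right hcx).mpr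
              (mul_le_mul_of_nonneg_left hQle hSp0)
          _ = C * Sp := by field_simp
      have h1' : dn n x * dn n x ≤ 2 * a ^ 2 + 2 * ((1 / c x) * S) ^ 2 := by
        rw [hdneq]
        set s := (1 / c x) * S with hsdef
        have ht2 : t ^ 2 ≤ 1 := by nlinarith
        have e1 : ((t ^ 2 - 1) * a + t * s) * ((t ^ 2 - 1) * a + t * s) ≤
            2 * ((t ^ 2 - 1) ^ 2 * a ^ 2) + 2 * (t ^ 2 * s ^ 2) := by
          nlinarith [sq_nonneg ((t ^ 2 - 1) * a - t * s)]
        have e2 : (t ^ 2 - 1) ^ 2 * a ^ 2 ≤ a ^ 2 := by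
          nlinarith [mul_nonneg (mul_nonneg (sq_nonneg t)
            (by linarith : (0:ℝ) ≤ 2 - t ^ 2)) (sq_nonneg a)]
        have e3 : t ^ 2 * s ^ 2 ≤ s ^ 2 := by
          nlinarith [mul_nonneg (sq_nonneg s) (by linarith : (0:ℝ) ≤ 1 - t ^ 2)]
        linarith
      have h5 : c x * (dn n x * dn n x) ≤
          c x * (2 * a ^ 2 + 2 * ((1 / c x) * S) ^ 2) :=
        mul_le_mul_of_nonneg_left h1' hcx.le
      have h6 : c x * (2 * a ^ 2 + 2 * ((1 / c x) * S) ^ 2) =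
          2 * (c x * a ^ 2) + 2 * (c x * ((1 / c x) * S) ^ 2) := by ring
      calc c x * dn n x * dn n x = c x * (dn n x * dn n x) := by ring
        _ ≤ c x * (2 * a ^ 2 + 2 * ((1 / c x) * S) ^ 2) := h5
        _ = 2 * (c x * a ^ 2) + 2 * (c x * ((1 / c x) * S) ^ 2) := h6
        _ ≤ 2 * (c x * a ^ 2) + 2 * (C * Sp) :=
            add_le_add_right (mul_le_mul_of_nonneg_left h4 (by norm_num)) _
        _ = 2 * (c x * a ^ 2) + 2 * C * Sp := by ring
    have hF0 : ∀ n x, 0 ≤ c x * dn n x * dn n x := by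
      intro n x
      rw [mul_assoc]
      exact mul_nonneg (hc x).le (mul_self_nonneg _)
    have hFev : ∀ x, ∀ᶠ n in atTop, c x * dn n x * dn n x = 0 := by
      intro x
      filter_upwards [hev1 x] with n hn
      have hz : ∑ y ∈ (h x).toFinset, r y x * φ y x * (cd.chi n y - cd.chi n x) = 0 := by
        refine Finset.sum_eq_zero fun y hy => ?_
        rw [Set.Finite.mem_toFinset, SimpleGraph.mem_neighborSet] at hy
        rw [hn.1, hn.2 y hy]; ring
      have : dn n x = 0 := by
        rw [hid n x, hz, hn.1]; ring
      rw [this]; ring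
    have hTend : Tendsto (fun n => ∑' x, c x * dn n x * dn n x) atTop (𝓝 0) :=
      myDC hgs hF0 hFle hFev
    exact hTend

end GaussBonnetGraph
end

section
/- Let K be a complete homogeneous connected locally finite weighted graph (with the cutoff functions χₙ). Then for all f ∈ Dom(d_max) and φ ∈ Dom(δ_max), the 'boundary term' vanishes: limₙ Σ_{e∈E} r(e) f(e⁻) dχₙ(e) φ(e) = 0. -/
open Filter Topology

namespace GaussBonnetGraph

variable {V : Type*}

/-- Cauchy–Schwarz for `tsum`. -/
lemma tsum_cauchy_schwarz {ι : Type*} {u v : ι → ℝ} (hu : ∀ i, 0 ≤ u i) (hv : ∀ i, 0 ≤ v i)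
    (h2u : Summable fun i => u i ^ 2) (h2v : Summable fun i => v i ^ 2) :
    ∑' i, u i * v i ≤ Real.sqrt (∑' i, u i ^ 2) * Real.sqrt (∑' i, v i ^ 2) := by
  have hsum : Summable fun i => u i * v i := by
    refine Summable.of_nonneg_of_le (fun i => mul_nonneg (hu i) (hv i)) (fun i => ?_)
      ((h2u.add h2v).div_const 2)
    nlinarith [sq_nonneg (u i - v i)]
  refine Summable.tsum_le_of_sum_le hsum fun s => ?_
  have h1 : (∑ i ∈ s, u i * v i) ^ 2 ≤ (∑ i ∈ s, u i ^ 2) * ∑ i ∈ s, v i ^ 2 :=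
    Finset.sum_mul_sq_le_sq_mul_sq s u v
  have h2 : ∑ i ∈ s, u i * v i ≤ Real.sqrt ((∑ i ∈ s, u i ^ 2) * ∑ i ∈ s, v i ^ 2) :=
    calc ∑ i ∈ s, u i * v i
        = Real.sqrt ((∑ i ∈ s, u i * v i) ^ 2) :=
          (Real.sqrt_sq (Finset.sum_nonneg fun i _ => mul_nonneg (hu i) (hv i))).symm
      _ ≤ _ := Real.sqrt_le_sqrt h1
  refine h2.trans ?_
  rw [Real.sqrt_mul (Finset.sum_nonneg fun i _ => sq_nonneg _)]
  exact mul_le_mul (Real.sqrt_le_sqrt (Summable.sum_le_tsum s (fun i _ => sq_nonneg _) h2u))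
    (Real.sqrt_le_sqrt (Summable.sum_le_tsum s (fun i _ => sq_nonneg _) h2v))
    (Real.sqrt_nonneg _) (Real.sqrt_nonneg _)

/-- on a complete homogeneous graph the boundary term vanishes:
for `f ∈ Dom d_max` and `φ ∈ Dom δ_max`,
`limₙ Σ_{e ∈ E} r e · f(e⁻) · dχₙ(e) · φ(e) = 0`. -/
theorem boundary_term_vanishes (G : SimpleGraph V) (hG : G.Connected) (h : LocFin G)
    (c : V → ℝ) (r : V → V → ℝ) (hc : ∀ v, 0 < c v)
    (hr : ∀ x y, G.Adj x y → 0 < r x y) (hrs : ∀ x y : V, r x y = r y x)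
    (cd : CompleteData G) (hom : Homogeneous G h c r cd)
    (f : V → ℝ) (hf : Mem0 c f) (hdf : MemD G r f)
    (φ : V → V → ℝ) (hφ : IsForm φ) (hφ2 : Mem1 G r φ) (hδφ : Mem0 c (deltaOp G h c r φ)) :
    Tendsto (fun n => ∑' e : G.Dart,
      r e.fst e.snd * f e.fst * dOp (cd.chi n) e.fst e.snd * φ e.fst e.snd)
      atTop (𝓝 0) := by
  classical
  obtain ⟨C, hC, hCineq⟩ := hom
  -- notation
  set g : ℕ → G.Dart → ℝ := fun n e =>
    r e.fst e.snd * f e.fst * dOp (cd.chi n) e.fst e.snd * φ e.fst e.snd with hgdef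
  set a : G.Dart → ℝ := fun e => r e.fst e.snd * φ e.fst e.snd ^ 2 with hadef
  set ind : ℕ → G.Dart → ℝ :=
    fun n e => if dOp (cd.chi n) e.fst e.snd = 0 then 0 else a e with hinddef
  set b : ℕ → G.Dart → ℝ := fun n e =>
    r e.fst e.snd * f e.fst ^ 2 * dOp (cd.chi n) e.fst e.snd ^ 2 with hbdef
  have hr' : ∀ e : G.Dart, 0 < r e.fst e.snd := fun e => hr _ _ e.adj
  have ha_nonneg : ∀ e, 0 ≤ a e := fun e => mul_nonneg (hr' e).le (sq_nonneg _)
  have hb_nonneg : ∀ n e, 0 ≤ b n e := fun n e =>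
    mul_nonneg (mul_nonneg (hr' e).le (sq_nonneg _)) (sq_nonneg _)
  have hind_nonneg : ∀ n e, 0 ≤ ind n e := by
    intro n e; simp only [hinddef]; split <;> [rfl; exact ha_nonneg e]
  have hind_le : ∀ n e, ind n e ≤ a e := by
    intro n e; simp only [hinddef]; split <;> [exact ha_nonneg e; rfl]
  have hind_summable : ∀ n, Summable (ind n) := fun n =>
    Summable.of_nonneg_of_le (hind_nonneg n) (hind_le n) hφ2
  set A : ℕ → ℝ := fun n => ∑' e, ind n e with hAdef
  have hA_nonneg : ∀ n, 0 ≤ A n := fun n => tsum_nonneg (hind_nonneg n)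
  -- the equivalence between darts and the sigma type
  set eqv : (Σ x : V, G.neighborSet x) ≃ G.Dart :=
    { toFun := fun s => ⟨(s.fst, s.snd), s.snd.property⟩
      invFun := fun d => ⟨d.fst, d.snd, d.adj⟩
      left_inv := fun s => by ext <;> simp
      right_inv := fun d => by ext <;> simp } with heqv
  have hfin : ∀ x : V, Finite (G.neighborSet x) := fun x => (h x).to_subtype
  have hsum_fiber : ∀ (x : V) (F : V → ℝ),
      ∑' y : G.neighborSet x, F y = ∑ y ∈ (h x).toFinset, F y := by
    intro x F
    rw [tsum_subtype]
    rw [tsum_eq_sum (s := (h x).toFinset)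
      (fun y hy => Set.indicator_of_notMem (by simpa using hy) F)]
    exact Finset.sum_congr rfl fun y hy => Set.indicator_of_mem (by simpa using hy) F
  -- homogeneity bound on each vertex
  have hb_vertex : ∀ (n : ℕ) (x : V),
      ∑ y ∈ (h x).toFinset, r x y * dOp (cd.chi n) x y ^ 2 ≤ C * c x := by
    intro n x
    have h1 := hCineq n x
    have h2 : ∑ y ∈ (h x).toFinset, r x y * dOp (cd.chi n) x y ^ 2 ≤
        ∑ y ∈ (h x).toFinset,
          (r y x * dOp (cd.chi n) y x ^ 2 + r x y * dOp (cd.chi n) x y ^ 2) := by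
      refine Finset.sum_le_sum fun y hy => ?_
      have hadj : G.Adj x y := by simpa using hy
      have : 0 ≤ r y x * dOp (cd.chi n) y x ^ 2 :=
        mul_nonneg (hr y x hadj.symm).le (sq_nonneg _)
      linarith
    have hcx := hc x
    rw [one_div, inv_mul_le_iff₀ hcx] at h1
    linarith
  -- summability and bound for b
  have hb_main : ∀ n, Summable (b n) ∧ ∑' e, b n e ≤ C * ∑' v, c v * f v ^ 2 := by
    intro n
    have hb_sigma_nonneg : ∀ p : Σ x : V, G.neighborSet x, 0 ≤ (b n ∘ eqv) p :=
      fun p => hb_nonneg n _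
    have hfib : ∀ x : V, Summable fun y : G.neighborSet x => (b n ∘ eqv) ⟨x, y⟩ := by
      intro x; haveI := hfin x; exact Summable.of_finite
    have hfibsum : ∀ x : V,
        ∑' y : G.neighborSet x, (b n ∘ eqv) ⟨x, y⟩ ≤ C * (c x * f x ^ 2) := by
      intro x
      have : ∑' y : G.neighborSet x, (b n ∘ eqv) ⟨x, y⟩
          = ∑ y ∈ (h x).toFinset, r x y * f x ^ 2 * dOp (cd.chi n) x y ^ 2 :=
        hsum_fiber x (fun y => r x y * f x ^ 2 * dOp (cd.chi n) x y ^ 2)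
      rw [this]
      have : ∑ y ∈ (h x).toFinset, r x y * f x ^ 2 * dOp (cd.chi n) x y ^ 2
          = f x ^ 2 * ∑ y ∈ (h x).toFinset, r x y * dOp (cd.chi n) x y ^ 2 := by
        rw [Finset.mul_sum]; exact Finset.sum_congr rfl fun y _ => by ring
      rw [this]
      have h2 := mul_le_mul_of_nonneg_left (hb_vertex n x) (sq_nonneg (f x))
      calc f x ^ 2 * ∑ y ∈ (h x).toFinset, r x y * dOp (cd.chi n) x y ^ 2
          ≤ f x ^ 2 * (C * c x) := h2
        _ = C * (c x * f x ^ 2) := by ring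
    have hfibsum_nonneg : ∀ x : V, 0 ≤ ∑' y : G.neighborSet x, (b n ∘ eqv) ⟨x, y⟩ :=
      fun x => tsum_nonneg fun y => hb_sigma_nonneg _
    have hsummable_fibsums :
        Summable fun x : V => ∑' y : G.neighborSet x, (b n ∘ eqv) ⟨x, y⟩ :=
      Summable.of_nonneg_of_le hfibsum_nonneg hfibsum (hf.mul_left C)
    have hsig : Summable (b n ∘ eqv) :=
      (summable_sigma_of_nonneg hb_sigma_nonneg).2 ⟨hfib, hsummable_fibsums⟩
    have hbn : Summable (b n) := (eqv.summable_iff (f := b n)).1 hsig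
    refine ⟨hbn, ?_⟩
    have h3 : ∑' e, b n e = ∑' p : Σ x : V, G.neighborSet x, (b n ∘ eqv) p :=
      (eqv.tsum_eq (b n)).symm
    rw [h3, Summable.tsum_sigma hsig]
    calc ∑' x : V, ∑' y : G.neighborSet x, (b n ∘ eqv) ⟨x, y⟩
        ≤ ∑' x : V, C * (c x * f x ^ 2) :=
          Summable.tsum_le_tsum hfibsum hsummable_fibsums (hf.mul_left C)
      _ = C * ∑' v, c v * f v ^ 2 := tsum_mul_left
  set K : ℝ := C * ∑' v, c v * f v ^ 2 with hKdef
  -- pointwise Cauchy–Schwarz identity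
  have hpoint : ∀ n e, |g n e| = Real.sqrt (ind n e) * Real.sqrt (b n e) := by
    intro n e
    rw [← Real.sqrt_mul (hind_nonneg n e), ← Real.sqrt_sq_eq_abs]
    congr 1
    simp only [hinddef, hgdef, hbdef, hadef]
    split
    · next hd => rw [hd]; ring
    · ring
  -- key estimate
  have habs_summable : ∀ n, Summable fun e => |g n e| := by
    intro n
    refine Summable.of_nonneg_of_le (fun e => abs_nonneg _) (fun e => ?_)
      (((hind_summable n).add (hb_main n).1).div_const 2)
    rw [hpoint n e]
    nlinarith [Real.sq_sqrt (hind_nonneg n e), Real.sq_sqrt (hb_nonneg n e),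
      sq_nonneg (Real.sqrt (ind n e) - Real.sqrt (b n e))]
  have key : ∀ n, |∑' e, g n e| ≤ Real.sqrt (A n) * Real.sqrt K := by
    intro n
    have h1 : |∑' e, g n e| ≤ ∑' e, |g n e| := by
      simpa using norm_tsum_le_tsum_norm (f := g n) (by simpa using habs_summable n)
    refine h1.trans ?_
    have h2 : ∑' e, |g n e| = ∑' e, Real.sqrt (ind n e) * Real.sqrt (b n e) :=
      tsum_congr fun e => hpoint n e
    rw [h2]
    have h2u : Summable fun e => Real.sqrt (ind n e) ^ 2 := by
      refine (summable_congr fun e => ?_).2 (hind_summable n)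
      rw [Real.sq_sqrt (hind_nonneg n e)]
    have h2v : Summable fun e => Real.sqrt (b n e) ^ 2 := by
      refine (summable_congr fun e => ?_).2 (hb_main n).1
      rw [Real.sq_sqrt (hb_nonneg n e)]
    have h3 := tsum_cauchy_schwarz (fun e => Real.sqrt_nonneg (ind n e))
      (fun e => Real.sqrt_nonneg (b n e)) h2u h2v
    refine h3.trans ?_
    have e1 : ∑' e, Real.sqrt (ind n e) ^ 2 = A n :=
      tsum_congr fun e => Real.sq_sqrt (hind_nonneg n e)
    have e2 : ∑' e, Real.sqrt (b n e) ^ 2 = ∑' e, b n e :=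
      tsum_congr fun e => Real.sq_sqrt (hb_nonneg n e)
    rw [e1, e2]
    exact mul_le_mul_of_nonneg_left (Real.sqrt_le_sqrt (hb_main n).2) (Real.sqrt_nonneg _)
  -- A n → 0
  have hA : Tendsto A atTop (𝓝 0) := by
    rw [Metric.tendsto_atTop]
    intro ε hε
    have hT := hφ2.hasSum
    have hev : ∀ᶠ s in atTop, (∑' e, a e) - ε < ∑ e ∈ s, a e :=
      hT.eventually (eventually_gt_nhds (by linarith))
    obtain ⟨s, hs⟩ := hev.exists
    have htail : ∑' e : ↑(↑s : Set G.Dart)ᶜ, a e < ε := by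
      have hsplit := Summable.sum_add_tsum_compl (s := s) hφ2
      linarith
    have hp : ∃ p, ∀ e ∈ s, e.fst ∈ cd.B p := by
      choose nn hnn using cd.exhausts
      exact ⟨s.sup fun e => nn e.fst,
        fun e he => cd.monoB (Finset.le_sup he) (hnn e.fst)⟩
    obtain ⟨p, hp⟩ := hp
    obtain ⟨n₀, hn₀⟩ := cd.stab p
    refine ⟨n₀, fun n hn => ?_⟩
    have hvanish : ∀ e ∈ s, ind n e = 0 := by
      intro e he
      simp only [hinddef]
      rw [if_pos (hn₀ n hn e.fst e.snd e.adj (Or.inl (hp e he)))]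
    have hAle : A n ≤ ∑' e : ↑(↑s : Set G.Dart)ᶜ, a e := by
      have hsplit := Summable.sum_add_tsum_compl (s := s) (hind_summable n)
      rw [Finset.sum_eq_zero hvanish, zero_add] at hsplit
      calc A n = ∑' e : ↑(↑s : Set G.Dart)ᶜ, ind n e := hsplit.symm
        _ ≤ _ := Summable.tsum_le_tsum (fun e => hind_le n e.1)
          ((hind_summable n).subtype _) (hφ2.subtype _)
    rw [Real.dist_eq, sub_zero, abs_of_nonneg (hA_nonneg n)]
    exact lt_of_le_of_lt hAle htail
  -- conclude by squeezing
  have hbound : Tendsto (fun n => Real.sqrt (A n) * Real.sqrt K) atTop (𝓝 0) := by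
    have h1 : Tendsto (fun n => Real.sqrt (A n)) atTop (𝓝 0) := by
      have := (Real.continuous_sqrt.tendsto' 0 0 Real.sqrt_zero).comp hA
      exact this
    simpa using h1.mul_const (Real.sqrt K)
  refine squeeze_zero_norm (fun n => ?_) hbound
  simpa [Real.norm_eq_abs] using key n

end GaussBonnetGraph
end
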